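/- Fix d,r,t∈ℕ and p∈[1,∞]. Let μ⃗=(μ^1,…,μ^t) be a vector of finite complex Borel measures on ℝ^d, let Φ=(φ^1,…,φ^r) with each φ^i∈W₀^1 satisfy the Riesz condition for p, and let X={x_j : j∈J} be a separated μ⃗-sampling set for V^p(Φ). Then there exists ε₀>0 such that for every Θ=(θ^1,…,θ^r) with each θ^i∈W₀^1 and ‖Φ−Θ‖_{(W^1)^{(r)}}<ε₀, Θ satisfies the Riesz condition for p and X is a μ⃗-sampling set for V^p(Θ); that is, there exist 0<A'_p≤B'_p<∞ with A'_p‖g‖_{L^p} ≤ ∑_{l=1}^t ‖((g∗μ^l)(x_j))_{j∈J}‖_{ℓ^p(J)} ≤ B'_p‖g‖_{L^p} for all g∈V^p(Θ). -/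

import Mathlib

open MeasureTheory ENNReal

noncomputable section

abbrev Euc (d : ℕ) := EuclideanSpace ℝ (Fin d)

/-- Embedding of `ℤ^d` into `ℝ^d`. -/
def zemb {d : ℕ} (k : Fin d → ℤ) : Euc d := WithLp.toLp 2 (fun i => (k i : ℝ))

/-- `ess sup_{x ∈ [0,1]^d} |f(x+k)|`, valued in `ℝ≥0∞`. -/
def cubeSup {d : ℕ} (f : Euc d → ℂ) (k : Fin d → ℤ) : ℝ≥0∞ :=
  essSup (fun x => (‖f (x + zemb k)‖₊ : ℝ≥0∞))
    (volume.restrict {x : Euc d | ∀ i, x i ∈ Set.Icc (0:ℝ) 1})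

/-- The Wiener amalgam norm `‖f‖_{W^p}`. -/
def WNorm {d : ℕ} (p : ℝ≥0∞) (f : Euc d → ℂ) : ℝ≥0∞ :=
  if p = ∞ then ⨆ k : Fin d → ℤ, cubeSup f k
  else (∑' k : Fin d → ℤ, cubeSup f k ^ p.toReal) ^ (1 / p.toReal)

/-- Membership in `W₀^1`: continuous with finite `W^1` norm. -/
def MemW01 {d : ℕ} (f : Euc d → ℂ) : Prop := Continuous f ∧ WNorm 1 f < ∞

/-- `(W^1)^{(r)}` norm of a vector of functions. -/
def WNormVec {d r : ℕ} (Φ : Fin r → Euc d → ℂ) : ℝ≥0∞ := ∑ i, WNorm 1 (Φ i)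

/-- the `ℓ^p` norm of a family of complex numbers, valued in `ℝ≥0∞`. -/
def lpNorm {ι : Type*} (p : ℝ≥0∞) (c : ι → ℂ) : ℝ≥0∞ :=
  if p = ∞ then ⨆ j, (‖c j‖₊ : ℝ≥0∞)
  else (∑' j, (‖c j‖₊ : ℝ≥0∞) ^ p.toReal) ^ (1 / p.toReal)

/-- The `(ℓ^p(ℤ^d))^{(r)}` norm `‖C‖ = ∑_i ‖c^i‖_{ℓ^p}`. -/
def vlpNorm {d r : ℕ} (p : ℝ≥0∞) (C : Fin r → (Fin d → ℤ) → ℂ) : ℝ≥0∞ :=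
  ∑ i, lpNorm p (C i)

/-- `f_C = ∑_{k ∈ ℤ^d} ∑_i c^i(k) φ^i(· - k)`. -/
def genFun {d r : ℕ} (Φ : Fin r → Euc d → ℂ) (C : Fin r → (Fin d → ℤ) → ℂ)
    (x : Euc d) : ℂ :=
  ∑' k : Fin d → ℤ, ∑ i, C i k * Φ i (x - zemb k)

/-- Integral of a complex-valued function against a finite complex Borel measure,
via the Jordan decompositions of the real and imaginary parts. -/
def cInt {d : ℕ} (μ : ComplexMeasure (Euc d)) (f : Euc d → ℂ) : ℂ :=
  ((∫ x, f x ∂(ComplexMeasure.re μ).toJordanDecomposition.posPart) -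
    (∫ x, f x ∂(ComplexMeasure.re μ).toJordanDecomposition.negPart)) +
  Complex.I * ((∫ x, f x ∂(ComplexMeasure.im μ).toJordanDecomposition.posPart) -
    (∫ x, f x ∂(ComplexMeasure.im μ).toJordanDecomposition.negPart))

/-- The convolution `(φ ∗ μ)(x) = ∫ φ(x - y) dμ(y)`. -/
def mconv {d : ℕ} (μ : ComplexMeasure (Euc d)) (φ : Euc d → ℂ) (x : Euc d) : ℂ :=
  cInt μ (fun y => φ (x - y))

/-- The total variation norm `|μ|(ℝ^d)` of a finite complex Borel measure, as the
supremum of `∑ ‖μ(S_i)‖` over finite disjoint families of measurable sets. -/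
def cmNorm {d : ℕ} (μ : ComplexMeasure (Euc d)) : ℝ≥0∞ :=
  ⨆ (n : ℕ) (S : Fin n → Set (Euc d)) (_ : ∀ i, MeasurableSet (S i))
    (_ : Pairwise (Function.onFun Disjoint S)), ∑ i, (‖μ (S i)‖₊ : ℝ≥0∞)

/-- norm of a vector of complex measures. -/
def cmNormVec {d t : ℕ} (μ : Fin t → ComplexMeasure (Euc d)) : ℝ≥0∞ :=
  ∑ l, cmNorm (μ l)

/-- The Riesz condition with explicit constants. -/
def RieszWith {d r : ℕ} (p : ℝ≥0∞) (Φ : Fin r → Euc d → ℂ) (m M : ℝ) : Prop :=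
  0 < m ∧ m ≤ M ∧ ∀ C : Fin r → (Fin d → ℤ) → ℂ, vlpNorm p C < ∞ →
    ENNReal.ofReal m * vlpNorm p C ≤ eLpNorm (genFun Φ C) p volume ∧
    eLpNorm (genFun Φ C) p volume ≤ ENNReal.ofReal M * vlpNorm p C

/-- The Riesz (unconditional basis) condition for `p`. -/
def RieszCond {d r : ℕ} (p : ℝ≥0∞) (Φ : Fin r → Euc d → ℂ) : Prop :=
  ∃ m M : ℝ, RieszWith p Φ m M

/-- `X` is a `μ⃗`-sampling set for `V^p(Φ)`. -/
def SamplingSet {d r t : ℕ} {J : Type*} (p : ℝ≥0∞) (Φ : Fin r → Euc d → ℂ)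
    (μ : Fin t → ComplexMeasure (Euc d)) (X : J → Euc d) : Prop :=
  ∃ A B : ℝ, 0 < A ∧ A ≤ B ∧ ∀ C : Fin r → (Fin d → ℤ) → ℂ, vlpNorm p C < ∞ →
    ENNReal.ofReal A * eLpNorm (genFun Φ C) p volume ≤
      ∑ l, lpNorm p (fun j => mconv (μ l) (genFun Φ C) (X j)) ∧
    ∑ l, lpNorm p (fun j => mconv (μ l) (genFun Φ C) (X j)) ≤
      ENNReal.ofReal B * eLpNorm (genFun Φ C) p volume

/-- `X` is separated with constant `δ`. -/
def SeparatedWith {d : ℕ} {J : Type*} (X : J → Euc d) (δ : ℝ) : Prop :=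
  ∀ i j : J, i ≠ j → δ ≤ dist (X i) (X j)

def SeparatedSet {d : ℕ} {J : Type*} (X : J → Euc d) : Prop :=
  ∃ δ : ℝ, 0 < δ ∧ SeparatedWith X δ

/-- Membership in `M_s(ℝ^d)`: `∫ (1+|x|)^s d|μ| < ∞`, expressed via the Jordan
decompositions of the real and imaginary parts. -/
def MemMs {d : ℕ} (s : ℝ) (μ : ComplexMeasure (Euc d)) : Prop :=
  (∫⁻ x, ENNReal.ofReal ((1 + ‖x‖) ^ s) ∂(ComplexMeasure.re μ).toJordanDecomposition.posPart < ∞) ∧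
  (∫⁻ x, ENNReal.ofReal ((1 + ‖x‖) ^ s) ∂(ComplexMeasure.re μ).toJordanDecomposition.negPart < ∞) ∧
  (∫⁻ x, ENNReal.ofReal ((1 + ‖x‖) ^ s) ∂(ComplexMeasure.im μ).toJordanDecomposition.posPart < ∞) ∧
  (∫⁻ x, ENNReal.ofReal ((1 + ‖x‖) ^ s) ∂(ComplexMeasure.im μ).toJordanDecomposition.negPart < ∞)

/-- `Φ ∈ W_s`: an `s`-localized Riesz generator. -/
def MemWs {d r : ℕ} (s : ℝ) (Φ : Fin r → Euc d → ℂ) : Prop :=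
  (∀ i, MemW01 (Φ i)) ∧ RieszCond 2 Φ ∧
    ∀ i, ∃ C0 : ℝ, 0 < C0 ∧ ∀ x : Euc d, ‖Φ i x‖ ≤ C0 * (1 + ‖x‖) ^ (-s)

end


noncomputable section Helpers

/-- `ℓ^p` norm of an `ℝ≥0∞`-valued family. -/
def elp {ι : Type*} (p : ℝ≥0∞) (F : ι → ℝ≥0∞) : ℝ≥0∞ :=
  if p = ∞ then ⨆ j, F j else (∑' j, F j ^ p.toReal) ^ (1 / p.toReal)

section elpBasics
variable {ι κ : Type*} {p : ℝ≥0∞}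

lemma toReal_pos_of_one_le (hp : 1 ≤ p) (hpt : p ≠ ∞) : 1 ≤ p.toReal := by
  have := ENNReal.toReal_mono hpt hp
  simpa using this

lemma elp_mono {F G : ι → ℝ≥0∞} (h : ∀ j, F j ≤ G j) : elp p F ≤ elp p G := by
  unfold elp
  split
  · exact iSup_mono h
  · exact ENNReal.rpow_le_rpow (ENNReal.tsum_le_tsum fun j =>
      ENNReal.rpow_le_rpow (h j) ENNReal.toReal_nonneg) (by positivity)

lemma elp_comp_le_of_injective {g : κ → ι} (hg : Function.Injective g) (F : ι → ℝ≥0∞) :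
    elp p (fun j => F (g j)) ≤ elp p F := by
  unfold elp
  split
  · exact iSup_le fun j => le_iSup F (g j)
  · exact ENNReal.rpow_le_rpow
      (tsum_comp_le_tsum_of_injective hg fun i => F i ^ p.toReal) (by positivity)

lemma le_elp (hp : 1 ≤ p) (F : ι → ℝ≥0∞) (j : ι) : F j ≤ elp p F := by
  unfold elp
  split
  · exact le_iSup F j
  case isFalse hpt =>
    have h1 : 1 ≤ p.toReal := toReal_pos_of_one_le hp hpt
    have h0 : p.toReal ≠ 0 := by linarith
    calc F j = (F j ^ p.toReal) ^ (1 / p.toReal) := by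
          rw [← ENNReal.rpow_mul, mul_one_div, div_self h0, ENNReal.rpow_one]
      _ ≤ _ := ENNReal.rpow_le_rpow (ENNReal.le_tsum j) (by positivity)

lemma elp_const_mul (hp : 1 ≤ p) (c : ℝ≥0∞) (F : ι → ℝ≥0∞) :
    elp p (fun j => c * F j) = c * elp p F := by
  unfold elp
  split
  · exact (ENNReal.mul_iSup _ _).symm
  case isFalse hpt =>
    have h1 : 1 ≤ p.toReal := toReal_pos_of_one_le hp hpt
    have h0 : p.toReal ≠ 0 := by linarith
    simp_rw [ENNReal.mul_rpow_of_nonneg _ _ ENNReal.toReal_nonneg, ENNReal.tsum_mul_left]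
    rw [ENNReal.mul_rpow_of_nonneg _ _ (by positivity : (0:ℝ) ≤ 1 / p.toReal),
      ← ENNReal.rpow_mul, mul_one_div, div_self h0, ENNReal.rpow_one]

end elpBasics

section Minkowski
variable {p : ℝ≥0∞}

lemma ennreal_rpow_iSup {ι : Type*} (F : ι → ℝ≥0∞) {q : ℝ} (hq : 0 < q) :
    (⨆ i, F i) ^ q = ⨆ i, F i ^ q :=
  (ENNReal.orderIsoRpow q hq).map_iSup F

/-- Binary Minkowski for `elp`. -/
lemma elp_add_le {ι : Type*} (hp : 1 ≤ p) (F G : ι → ℝ≥0∞) :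
    elp p (fun n => F n + G n) ≤ elp p F + elp p G := by
  unfold elp
  split
  · exact iSup_le fun j => add_le_add (le_iSup F j) (le_iSup G j)
  case isFalse hpt =>
    have h1 : 1 ≤ p.toReal := toReal_pos_of_one_le hp hpt
    letI : MeasurableSpace ι := ⊤
    haveI : MeasurableSingletonClass ι := ⟨fun _ => trivial⟩
    have hF : Measurable F := fun _ _ => trivial
    have hG : Measurable G := fun _ _ => trivial
    have := ENNReal.lintegral_Lp_add_le (μ := (Measure.count : Measure ι))
      hF.aemeasurable hG.aemeasurable h1
    simpa [MeasureTheory.lintegral_count] using this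

lemma elp_finsum_le {ι κ : Type*} (hp : 1 ≤ p) (s : Finset κ) (f : κ → ι → ℝ≥0∞) :
    elp p (fun n => ∑ i ∈ s, f i n) ≤ ∑ i ∈ s, elp p (f i) := by
  classical
  induction s using Finset.induction_on with
  | empty =>
      simp only [Finset.sum_empty]
      unfold elp
      split
      · simp
      case isFalse hpt =>
        have h1 : 1 ≤ p.toReal := toReal_pos_of_one_le hp hpt
        simp [ENNReal.zero_rpow_of_pos (lt_of_lt_of_le zero_lt_one h1),
          ENNReal.zero_rpow_of_pos (div_pos zero_lt_one (lt_of_lt_of_le zero_lt_one h1))]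
        exact lt_of_lt_of_le zero_lt_one h1
  | insert a s' hx ih =>
      simp only [Finset.sum_insert hx]
      exact le_trans (elp_add_le hp _ _) (add_le_add_right ih _)

/-- Countable Minkowski inequality for `elp`. -/
lemma elp_tsum_le {ι κ : Type*} [Countable κ] (hp : 1 ≤ p) (f : κ → ι → ℝ≥0∞) :
    elp p (fun n => ∑' i, f i n) ≤ ∑' i, elp p (f i) := by
  classical
  by_cases hpt : p = ∞
  · subst hpt
    simp only [elp, if_pos rfl]
    refine iSup_le fun n => ENNReal.tsum_le_tsum fun i => le_iSup (fun m => f i m) n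
  · have h1 : 1 ≤ p.toReal := toReal_pos_of_one_le hp hpt
    have hq : (0:ℝ) < p.toReal := lt_of_lt_of_le zero_lt_one h1
    have hq' : (0:ℝ) < 1 / p.toReal := div_pos zero_lt_one hq
    letI : MeasurableSpace ι := ⊤
    haveI : MeasurableSingletonClass ι := ⟨fun _ => trivial⟩
    have key : ∑' n : ι, (∑' i, f i n) ^ p.toReal
        = ⨆ s : Finset κ, ∑' n : ι, (∑ i ∈ s, f i n) ^ p.toReal := by
      calc ∑' n : ι, (∑' i, f i n) ^ p.toReal
          = ∫⁻ n : ι, ⨆ s : Finset κ, (∑ i ∈ s, f i n) ^ p.toReal ∂Measure.count := by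
            rw [MeasureTheory.lintegral_count]
            exact tsum_congr fun n => by
              rw [ENNReal.tsum_eq_iSup_sum, ennreal_rpow_iSup _ hq]
        _ = ⨆ s : Finset κ, ∫⁻ n : ι, (∑ i ∈ s, f i n) ^ p.toReal ∂Measure.count :=
            MeasureTheory.lintegral_iSup_directed (fun s => (show Measurable fun n : ι => (∑ i ∈ s, f i n) ^ p.toReal from fun _ _ => trivial).aemeasurable)
              (fun s t => ⟨s ∪ t,
                fun n => ENNReal.rpow_le_rpow
                  (Finset.sum_le_sum_of_subset Finset.subset_union_left) hq.le,
                fun n => ENNReal.rpow_le_rpow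
                  (Finset.sum_le_sum_of_subset Finset.subset_union_right) hq.le⟩)
        _ = ⨆ s : Finset κ, ∑' n : ι, (∑ i ∈ s, f i n) ^ p.toReal := by
            simp_rw [MeasureTheory.lintegral_count]
    have lhs_eq : elp p (fun n => ∑' i, f i n)
        = ⨆ s : Finset κ, elp p (fun n => ∑ i ∈ s, f i n) := by
      simp only [elp, if_neg hpt]
      rw [key, ennreal_rpow_iSup _ hq']
    rw [lhs_eq]
    exact iSup_le fun s => (elp_finsum_le hp s f).trans (ENNReal.sum_le_tsum s)

end Minkowski

section Cubes
variable {d : ℕ}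

lemma euc_sub_apply (x y : Euc d) (i : Fin d) : (x - y) i = x i - y i := rfl
lemma euc_add_apply (x y : Euc d) (i : Fin d) : (x + y) i = x i + y i := rfl

/-- coordinatewise floor -/
def fl (x : Euc d) : Fin d → ℤ := fun i => ⌊x i⌋

lemma fl_sub_zemb (x : Euc d) (k : Fin d → ℤ) : fl (x - zemb k) = fl x - k := by
  funext i
  simp [fl, euc_sub_apply, zemb, Int.floor_sub_intCast]

lemma elp_shift (p : ℝ≥0∞) (F : (Fin d → ℤ) → ℝ≥0∞) (k : Fin d → ℤ) :
    elp p (fun n => F (n - k)) = elp p F := by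
  unfold elp
  split
  · refine le_antisymm (iSup_le fun n => le_iSup F (n - k)) (iSup_le fun n => ?_)
    have : F n = F (n + k - k) := by simp
    rw [this]
    exact le_iSup (fun m => F (m - k)) (n + k)
  · congr 1
    have := (Equiv.subRight k).tsum_eq (fun n => F n ^ p.toReal)
    simpa using this

/-- the half open cube with corner `n` -/
def IcoCube (n : Fin d → ℤ) : Set (Euc d) := {x | ∀ i, x i ∈ Set.Ico (n i : ℝ) (n i + 1)}

lemma mem_IcoCube_iff {n : Fin d → ℤ} {x : Euc d} : x ∈ IcoCube n ↔ fl x = n := by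
  constructor
  · intro h; funext i
    exact Int.floor_eq_iff.mpr ⟨(h i).1, (h i).2⟩
  · rintro rfl i
    exact ⟨Int.floor_le _, Int.lt_floor_add_one _⟩

lemma measurable_eval_euc (i : Fin d) : Measurable fun x : Euc d => x i := by
  have : Continuous fun x : Euc d => x i := by
    exact (continuous_apply i).comp (PiLp.continuous_ofLp 2 (fun _ : Fin d => ℝ))
  exact this.measurable

lemma measurableSet_IcoCube (n : Fin d → ℤ) : MeasurableSet (IcoCube n) := by
  have : IcoCube n = ⋂ i, (fun x : Euc d => x i) ⁻¹' Set.Ico ((n i : ℝ)) (n i + 1) := by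
    ext x; simp [IcoCube]
  rw [this]
  exact MeasurableSet.iInter fun i => (measurable_eval_euc i) measurableSet_Ico

lemma IcoCube_disjoint : Pairwise (Function.onFun Disjoint (IcoCube (d := d))) := by
  intro n m hnm
  rw [Function.onFun, Set.disjoint_left]
  intro x hx hx'
  exact hnm ((mem_IcoCube_iff.mp hx).symm.trans (mem_IcoCube_iff.mp hx'))

lemma IcoCube_iUnion : (⋃ n, IcoCube (d := d) n) = Set.univ := by
  ext x
  simp only [Set.mem_iUnion, Set.mem_univ, iff_true]
  exact ⟨fl x, mem_IcoCube_iff.mpr rfl⟩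

lemma lintegral_eq_sum_cubes (f : Euc d → ℝ≥0∞) :
    ∫⁻ x, f x = ∑' n : Fin d → ℤ, ∫⁻ x in IcoCube n, f x := by
  rw [← MeasureTheory.lintegral_iUnion measurableSet_IcoCube IcoCube_disjoint f,
    IcoCube_iUnion, Measure.restrict_univ]

lemma volume_pi_box (s : (i : Fin d) → Set ℝ) (hs : ∀ i, MeasurableSet (s i)) :
    volume ({x : Euc d | ∀ i, x i ∈ s i}) = ∏ i, volume (s i) := by
  have e := EuclideanSpace.volume_preserving_symm_measurableEquiv_toLp (Fin d)
  have : ({x : Euc d | ∀ i, x i ∈ s i})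
      = ((MeasurableEquiv.toLp 2 (Fin d → ℝ)).symm) ⁻¹' (Set.univ.pi s) := by
    ext x; simp [Set.mem_pi]
  rw [this, e.measure_preimage ((MeasurableSet.univ_pi hs).nullMeasurableSet)]
  rw [MeasureTheory.volume_pi_pi]

lemma volume_IcoCube (n : Fin d → ℤ) : volume (IcoCube n) = 1 := by
  rw [show IcoCube n = {x : Euc d | ∀ i, x i ∈ Set.Ico ((n i : ℝ)) (n i + 1)} from rfl,
    volume_pi_box _ (fun i => measurableSet_Ico)]
  simp [Real.volume_Ico]

end Cubes

section PointwiseBound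
variable {d : ℕ}

/-- The closed unit cube. -/
def IccCube (d : ℕ) : Set (Euc d) := {x : Euc d | ∀ i, x i ∈ Set.Icc (0:ℝ) 1}

lemma cube_inter_open_pos {U : Set (Euc d)} (hU : IsOpen U) {z : Euc d} (hzU : z ∈ U)
    (hzQ : z ∈ IccCube d) : 0 < volume (U ∩ IccCube d) := by
  obtain ⟨ρ, hρ, hball⟩ := Metric.isOpen_iff.mp hU z hzU
  set η : ℝ := min (ρ / (d + 1)) 1 with hηdef
  have hη0 : 0 < η := lt_min (by positivity) one_pos
  have hη1 : η ≤ 1 := min_le_right _ _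
  set a : Fin d → ℝ := fun i => min (z i) (1 - η) with hadef
  have key : {x : Euc d | ∀ i, x i ∈ Set.Icc (a i) (a i + η)} ⊆ U ∩ IccCube d := by
    intro x hx
    have hcoord : ∀ i, |x i - z i| ≤ η := by
      intro i
      have hxi := hx i
      have hz1 : a i ≤ z i := min_le_left _ _
      have hz2 : z i ≤ a i + η := by
        rcases le_or_gt (z i) (1 - η) with h | h
        · have : a i = z i := min_eq_left h
          linarith
        · have : a i = 1 - η := min_eq_right h.le
          have := (hzQ i).2
          linarith
      exact abs_le.mpr ⟨by linarith [hxi.1, hxi.2], by linarith [hxi.1, hxi.2]⟩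
    constructor
    · apply hball
      rw [Metric.mem_ball, EuclideanSpace.dist_eq]
      have hsum : (∑ i, dist (x i) (z i) ^ 2) ≤ (d : ℝ) * η ^ 2 := by
        calc (∑ i, dist (x i) (z i) ^ 2) ≤ ∑ _i : Fin d, η ^ 2 :=
              Finset.sum_le_sum fun i _ => by
                rw [Real.dist_eq]
                nlinarith [hcoord i, abs_nonneg (x i - z i), sq_abs (x i - z i)]
          _ = (d : ℝ) * η ^ 2 := by simp [Finset.sum_const, nsmul_eq_mul]
      have hsd : Real.sqrt d < (d : ℝ) + 1 := by
        rw [show Real.sqrt d < (d:ℝ) + 1 ↔ (d:ℝ) < ((d:ℝ)+1)^2 from Real.sqrt_lt' (by positivity)]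
        nlinarith [Nat.cast_nonneg (α := ℝ) d]
      calc Real.sqrt (∑ i, dist (x i) (z i) ^ 2) ≤ Real.sqrt ((d:ℝ) * η ^ 2) :=
            Real.sqrt_le_sqrt hsum
        _ = Real.sqrt d * η := by
            rw [Real.sqrt_mul (Nat.cast_nonneg d), Real.sqrt_sq hη0.le]
        _ ≤ Real.sqrt d * (ρ / (d + 1)) := by
            have := min_le_left (ρ / (d + 1)) 1
            exact mul_le_mul_of_nonneg_left (by simpa [hηdef] using this) (Real.sqrt_nonneg d)
        _ < ((d:ℝ) + 1) * (ρ / (d + 1)) := by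
            apply mul_lt_mul_of_pos_right hsd (by positivity)
        _ = ρ := by field_simp
    · intro i
      have hxi := hx i
      have h0 : 0 ≤ a i := le_min (hzQ i).1 (by linarith)
      have h1 : a i + η ≤ 1 := by
        have := min_le_right (z i) (1 - η)
        simp only [hadef] at *
        linarith
      exact ⟨by linarith [hxi.1], by linarith [hxi.2]⟩
  calc (0:ℝ≥0∞) < ENNReal.ofReal η ^ d := ENNReal.pow_pos (ENNReal.ofReal_pos.mpr hη0) d
    _ = volume {x : Euc d | ∀ i, x i ∈ Set.Icc (a i) (a i + η)} := by
        rw [volume_pi_box _ (fun i => measurableSet_Icc)]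
        simp [Real.volume_Icc]
    _ ≤ volume (U ∩ IccCube d) := measure_mono key

lemma nnnorm_le_cubeSup {ψ : Euc d → ℂ} (hψ : Continuous ψ) {x : Euc d} {k : Fin d → ℤ}
    (hx : ∀ i, x i - (k i : ℝ) ∈ Set.Icc (0:ℝ) 1) : (‖ψ x‖₊ : ℝ≥0∞) ≤ cubeSup ψ k := by
  by_contra hcon
  push_neg at hcon
  set m := cubeSup ψ k with hm
  have hmtop : m ≠ ∞ := (lt_of_lt_of_le hcon le_top).ne_top
  set z : Euc d := x - zemb k with hz
  have hzQ : z ∈ IccCube d := fun i => hx i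
  set U : Set (Euc d) := {w | m.toReal < ‖ψ (w + zemb k)‖} with hU
  have hUopen : IsOpen U :=
    isOpen_lt continuous_const ((hψ.comp (continuous_id.add continuous_const)).norm)
  have hzU : z ∈ U := by
    have hx' : z + zemb k = x := by simp [hz]
    have : m.toReal < ((‖ψ x‖₊ : ℝ≥0∞)).toReal :=
      (ENNReal.toReal_lt_toReal hmtop ENNReal.coe_ne_top).mpr hcon
    simpa [hU, hx'] using this
  have hzero : volume (U ∩ IccCube d) = 0 := by
    have hae : ∀ᵐ w ∂(volume.restrict (IccCube d)), (‖ψ (w + zemb k)‖₊ : ℝ≥0∞) ≤ m :=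
      ae_le_essSup
    have hae' : volume.restrict (IccCube d) U = 0 := by
      refine measure_mono_null (fun w hw => ?_) (ae_iff.mp hae)
      simp only [Set.mem_setOf_eq, not_le]
      exact (ENNReal.toReal_lt_toReal hmtop ENNReal.coe_ne_top).mp (by simpa [hU] using hw)
    rwa [Measure.restrict_apply hUopen.measurableSet] at hae'
  exact (cube_inter_open_pos hUopen hzU hzQ).ne' hzero

lemma nnnorm_sub_le_cubeSup_fl {ψ : Euc d → ℂ} (hψ : Continuous ψ) (x : Euc d) (k : Fin d → ℤ) :
    (‖ψ (x - zemb k)‖₊ : ℝ≥0∞) ≤ cubeSup ψ (fl x - k) := by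
  apply nnnorm_le_cubeSup hψ
  intro i
  rw [euc_sub_apply]
  have hz : zemb k i = (k i : ℝ) := rfl
  rw [hz]
  have h1 : (((fl x - k) i : ℤ) : ℝ) = (⌊x i⌋ : ℝ) - k i := by
    simp [fl, Pi.sub_apply]
  rw [h1, Set.mem_Icc]
  constructor
  · linarith [Int.floor_le (x i)]
  · linarith [Int.lt_floor_add_one (x i)]

end PointwiseBound

section GenFun
variable {d r : ℕ} {p : ℝ≥0∞}

lemma enn_tsum_nnnorm_le {ι : Type*} (f : ι → ℂ) :
    (‖∑' i, f i‖₊ : ℝ≥0∞) ≤ ∑' i, (‖f i‖₊ : ℝ≥0∞) := by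
  by_cases hs : Summable (fun i => ‖f i‖₊)
  · have hf : Summable f := Summable.of_nnnorm hs
    rw [← ENNReal.coe_tsum hs]
    exact ENNReal.coe_le_coe.mpr (nnnorm_tsum_le hs)
  · have : ∑' i, (‖f i‖₊ : ℝ≥0∞) = ∞ := by
      rwa [← ENNReal.tsum_coe_ne_top_iff_summable, not_ne_iff] at hs
    simp [this]

lemma summable_of_tsum_enorm_lt {ι : Type*} {f : ι → ℂ}
    (h : ∑' i, (‖f i‖₊ : ℝ≥0∞) < ∞) : Summable f :=
  Summable.of_nnnorm (ENNReal.tsum_coe_ne_top_iff_summable.mp h.ne)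

/-- the cube-wise majorant sequence of `genFun Ψ C`. -/
def gMaj (Ψ : Fin r → Euc d → ℂ) (C : Fin r → (Fin d → ℤ) → ℂ) (n : Fin d → ℤ) : ℝ≥0∞ :=
  ∑' k : Fin d → ℤ, ∑ i, (‖C i k‖₊ : ℝ≥0∞) * cubeSup (Ψ i) (n - k)

variable {Ψ : Fin r → Euc d → ℂ} {C : Fin r → (Fin d → ℤ) → ℂ}

lemma tsum_enorm_le_gMaj (hcont : ∀ i, Continuous (Ψ i)) (x : Euc d) :
    ∑' k : Fin d → ℤ, (‖∑ i, C i k * Ψ i (x - zemb k)‖₊ : ℝ≥0∞) ≤ gMaj Ψ C (fl x) := by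
  refine ENNReal.tsum_le_tsum fun k => ?_
  calc (‖∑ i, C i k * Ψ i (x - zemb k)‖₊ : ℝ≥0∞)
      ≤ ∑ i, (‖C i k * Ψ i (x - zemb k)‖₊ : ℝ≥0∞) := by
        rw [← ENNReal.coe_finset_sum]
        exact ENNReal.coe_le_coe.mpr (nnnorm_sum_le _ _)
    _ ≤ ∑ i, (‖C i k‖₊ : ℝ≥0∞) * cubeSup (Ψ i) (fl x - k) := by
        refine Finset.sum_le_sum fun i _ => ?_
        rw [nnnorm_mul, ENNReal.coe_mul]
        exact mul_le_mul_right (nnnorm_sub_le_cubeSup_fl (hcont i) x k) _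

lemma enorm_genFun_le_gMaj (hcont : ∀ i, Continuous (Ψ i)) (x : Euc d) :
    (‖genFun Ψ C x‖₊ : ℝ≥0∞) ≤ gMaj Ψ C (fl x) :=
  le_trans (enn_tsum_nnnorm_le _) (tsum_enorm_le_gMaj hcont x)

lemma WNorm_one_eq (ψ : Euc d → ℂ) : WNorm 1 ψ = ∑' k, cubeSup ψ k := by
  simp [WNorm, ENNReal.one_ne_top]

lemma lpNorm_eq_elp {ι : Type*} (p : ℝ≥0∞) (c : ι → ℂ) :
    lpNorm p c = elp p (fun j => (‖c j‖₊ : ℝ≥0∞)) := rfl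

/-- rearrangement of the majorant as a convolution-type sum. -/
lemma gMaj_eq (n : Fin d → ℤ) :
    gMaj Ψ C n = ∑' q : (Fin d → ℤ) × Fin r,
      cubeSup (Ψ q.2) q.1 * (‖C q.2 (n - q.1)‖₊ : ℝ≥0∞) := by
  rw [ENNReal.tsum_prod (f := fun (k : Fin d → ℤ) (i : Fin r) =>
    cubeSup (Ψ i) k * (‖C i (n - k)‖₊ : ℝ≥0∞))]
  have h1 : ∀ k, (∑ i, (‖C i k‖₊ : ℝ≥0∞) * cubeSup (Ψ i) (n - k))
      = ∑' i : Fin r, (‖C i k‖₊ : ℝ≥0∞) * cubeSup (Ψ i) (n - k) := fun k => (tsum_fintype _).symm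
  unfold gMaj
  simp_rw [h1]
  have := (Equiv.subLeft n).tsum_eq
    (fun k => ∑' i : Fin r, (‖C i k‖₊ : ℝ≥0∞) * cubeSup (Ψ i) (n - k))
  rw [← this]
  refine tsum_congr fun k => tsum_congr fun i => ?_
  simp [mul_comm, sub_sub_cancel]

lemma elp_gMaj_le (hp : 1 ≤ p) :
    elp p (gMaj Ψ C) ≤ (∑ i, WNorm 1 (Ψ i)) * vlpNorm p C := by
  have h1 : elp p (gMaj Ψ C) ≤ ∑' q : (Fin d → ℤ) × Fin r,
      cubeSup (Ψ q.2) q.1 * lpNorm p (C q.2) := by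
    have := elp_tsum_le (ι := Fin d → ℤ) hp
      (fun (q : (Fin d → ℤ) × Fin r) (n : Fin d → ℤ) =>
        cubeSup (Ψ q.2) q.1 * (‖C q.2 (n - q.1)‖₊ : ℝ≥0∞))
    have heq : elp p (gMaj Ψ C) = elp p (fun n => ∑' q : (Fin d → ℤ) × Fin r,
        cubeSup (Ψ q.2) q.1 * (‖C q.2 (n - q.1)‖₊ : ℝ≥0∞)) := by
      congr 1; funext n; exact gMaj_eq n
    rw [heq]
    refine this.trans (ENNReal.tsum_le_tsum fun q => ?_)
    rw [elp_const_mul hp]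
    refine mul_le_mul_right ?_ _
    rw [lpNorm_eq_elp, ← elp_shift p (fun m => (‖C q.2 m‖₊ : ℝ≥0∞)) q.1]
  refine h1.trans ?_
  rw [ENNReal.tsum_prod (f := fun (k : Fin d → ℤ) (i : Fin r) =>
    cubeSup (Ψ i) k * lpNorm p (C i))]
  have h2 : ∀ k : Fin d → ℤ, ∑' i : Fin r, cubeSup (Ψ i) k * lpNorm p (C i)
      = ∑ i, cubeSup (Ψ i) k * lpNorm p (C i) := fun k => tsum_fintype _
  simp_rw [h2]
  rw [Summable.tsum_finsetSum (fun i _ => ENNReal.summable)]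
  have h3 : ∀ i : Fin r, ∑' k : Fin d → ℤ, cubeSup (Ψ i) k * lpNorm p (C i)
      = WNorm 1 (Ψ i) * lpNorm p (C i) := by
    intro i
    rw [ENNReal.tsum_mul_right, WNorm_one_eq]
  simp_rw [h3]
  unfold vlpNorm
  calc ∑ i, WNorm 1 (Ψ i) * lpNorm p (C i)
      ≤ ∑ i, (∑ j, WNorm 1 (Ψ j)) * lpNorm p (C i) :=
        Finset.sum_le_sum fun i _ => mul_le_mul_left
          (Finset.single_le_sum (f := fun j => WNorm 1 (Ψ j)) (fun j _ => zero_le)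
            (Finset.mem_univ i)) _
    _ = (∑ j, WNorm 1 (Ψ j)) * ∑ i, lpNorm p (C i) := by rw [Finset.mul_sum]

end GenFun

section GenFun2
variable {d r : ℕ} {p : ℝ≥0∞} {Ψ : Fin r → Euc d → ℂ} {C : Fin r → (Fin d → ℤ) → ℂ}

/-- Lemma A, part 1: the `L^p` norm is dominated by the `ℓ^p` norm of the majorant. -/
lemma eLpNorm_le_elp_gMaj (hp : 1 ≤ p) (hcont : ∀ i, Continuous (Ψ i)) :
    eLpNorm (genFun Ψ C) p volume ≤ elp p (gMaj Ψ C) := by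
  have hp0 : p ≠ 0 := (lt_of_lt_of_le zero_lt_one hp).ne'
  by_cases hpt : p = ∞
  · subst hpt
    rw [eLpNorm_exponent_top, eLpNormEssSup]
    refine essSup_le_of_ae_le _ (Filter.Eventually.of_forall fun x => ?_)
    exact le_trans (enorm_genFun_le_gMaj hcont x) (le_elp le_top _ (fl x))
  · have h1 : 1 ≤ p.toReal := toReal_pos_of_one_le hp hpt
    have hq : (0:ℝ) < p.toReal := lt_of_lt_of_le zero_lt_one h1
    rw [eLpNorm_eq_lintegral_rpow_enorm_toReal hp0 hpt]
    simp only [elp, if_neg hpt]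
    refine ENNReal.rpow_le_rpow ?_ (by positivity)
    calc ∫⁻ x, (‖genFun Ψ C x‖₊ : ℝ≥0∞) ^ p.toReal
        ≤ ∫⁻ x, gMaj Ψ C (fl x) ^ p.toReal :=
          MeasureTheory.lintegral_mono fun x =>
            ENNReal.rpow_le_rpow (enorm_genFun_le_gMaj hcont x) hq.le
      _ = ∑' n : Fin d → ℤ, ∫⁻ x in IcoCube n, gMaj Ψ C (fl x) ^ p.toReal :=
          lintegral_eq_sum_cubes _
      _ ≤ ∑' n : Fin d → ℤ, gMaj Ψ C n ^ p.toReal := by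
          refine ENNReal.tsum_le_tsum fun n => ?_
          have : ∫⁻ x in IcoCube n, gMaj Ψ C (fl x) ^ p.toReal
              ≤ ∫⁻ _x in IcoCube n, gMaj Ψ C n ^ p.toReal := by
            refine MeasureTheory.setLIntegral_mono_ae (by fun_prop) ?_
            exact Filter.Eventually.of_forall fun x hx => by
              rw [mem_IcoCube_iff.mp hx]
          refine this.trans ?_
          rw [MeasureTheory.setLIntegral_const, volume_IcoCube, mul_one]

/-- Lemma A. -/
lemma eLpNorm_genFun_le (hp : 1 ≤ p) (hcont : ∀ i, Continuous (Ψ i)) :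
    eLpNorm (genFun Ψ C) p volume ≤ (∑ i, WNorm 1 (Ψ i)) * vlpNorm p C :=
  (eLpNorm_le_elp_gMaj hp hcont).trans (elp_gMaj_le hp)

lemma gMaj_le_const (hp : 1 ≤ p) (n : Fin d → ℤ) :
    gMaj Ψ C n ≤ ∑ i, lpNorm p (C i) * WNorm 1 (Ψ i) := by
  unfold gMaj
  calc ∑' k : Fin d → ℤ, ∑ i, (‖C i k‖₊ : ℝ≥0∞) * cubeSup (Ψ i) (n - k)
      ≤ ∑' k : Fin d → ℤ, ∑ i, lpNorm p (C i) * cubeSup (Ψ i) (n - k) := by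
        refine ENNReal.tsum_le_tsum fun k => Finset.sum_le_sum fun i _ => ?_
        exact mul_le_mul_left (le_elp hp (fun m => (‖C i m‖₊ : ℝ≥0∞)) k) _
    _ = ∑ i, ∑' k : Fin d → ℤ, lpNorm p (C i) * cubeSup (Ψ i) (n - k) :=
        Summable.tsum_finsetSum fun i _ => ENNReal.summable
    _ = ∑ i, lpNorm p (C i) * WNorm 1 (Ψ i) := by
        refine Finset.sum_congr rfl fun i _ => ?_
        rw [ENNReal.tsum_mul_left, WNorm_one_eq]
        congr 1
        have := (Equiv.subLeft n).tsum_eq (fun k => cubeSup (Ψ i) k)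
        simpa using this

lemma enorm_genFun_le_const (hp : 1 ≤ p) (hcont : ∀ i, Continuous (Ψ i)) (x : Euc d) :
    (‖genFun Ψ C x‖₊ : ℝ≥0∞) ≤ ∑ i, lpNorm p (C i) * WNorm 1 (Ψ i) :=
  (enorm_genFun_le_gMaj hcont x).trans (gMaj_le_const hp _)

lemma lpNorm_le_vlpNorm (i : Fin r) : lpNorm p (C i) ≤ vlpNorm p C :=
  Finset.single_le_sum (f := fun j => lpNorm p (C j)) (fun j _ => zero_le) (Finset.mem_univ i)

lemma genFun_summand_summable (hp : 1 ≤ p) (hcont : ∀ i, Continuous (Ψ i))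
    (hW : ∀ i, WNorm 1 (Ψ i) < ∞) (hC : vlpNorm p C < ∞) (x : Euc d) :
    Summable fun k : Fin d → ℤ => ∑ i, C i k * Ψ i (x - zemb k) := by
  apply summable_of_tsum_enorm_lt
  refine lt_of_le_of_lt (tsum_enorm_le_gMaj hcont x) (lt_of_le_of_lt (gMaj_le_const hp _) ?_)
  exact ENNReal.sum_lt_top.mpr fun i _ =>
    ENNReal.mul_lt_top (lt_of_le_of_lt (lpNorm_le_vlpNorm i) hC) (hW i)

lemma genFun_measurable (hp : 1 ≤ p) (hcont : ∀ i, Continuous (Ψ i))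
    (hW : ∀ i, WNorm 1 (Ψ i) < ∞) (hC : vlpNorm p C < ∞) :
    Measurable (genFun Ψ C) := by
  refine measurable_of_tendsto_metrizable' (Filter.atTop : Filter (Finset (Fin d → ℤ)))
    (f := fun s x => ∑ k ∈ s, ∑ i, C i k * Ψ i (x - zemb k))
    (fun s => ?_) ?_
  · have : Continuous fun x : Euc d => ∑ k ∈ s, ∑ i, C i k * Ψ i (x - zemb k) := by
      refine continuous_finset_sum _ fun k _ => continuous_finset_sum _ fun i _ => ?_
      exact continuous_const.mul ((hcont i).comp (continuous_id.sub continuous_const))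
    exact this.measurable
  · rw [tendsto_pi_nhds]
    intro x
    exact (genFun_summand_summable hp hcont hW hC x).hasSum

lemma genFun_add_split {Φ Θ : Fin r → Euc d → ℂ} (hp : 1 ≤ p)
    (hΘ : ∀ i, Continuous (Θ i)) (hΔ : ∀ i, Continuous fun y => Φ i y - Θ i y)
    (hWΘ : ∀ i, WNorm 1 (Θ i) < ∞) (hWΔ : ∀ i, WNorm 1 (fun y => Φ i y - Θ i y) < ∞)
    (hC : vlpNorm p C < ∞) (x : Euc d) :
    genFun Φ C x = genFun Θ C x + genFun (fun i y => Φ i y - Θ i y) C x := by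
  unfold genFun
  rw [← Summable.tsum_add (genFun_summand_summable hp hΘ hWΘ hC x)
    (genFun_summand_summable hp hΔ hWΔ hC x)]
  exact tsum_congr fun k => by
    rw [← Finset.sum_add_distrib]
    exact Finset.sum_congr rfl fun i _ => by ring

end GenFun2

section Measures
variable {d r : ℕ} {p : ℝ≥0∞}

lemma lintegral_eq_sum_cubes' (ν : Measure (Euc d)) (f : Euc d → ℝ≥0∞) :
    ∫⁻ x, f x ∂ν = ∑' n : Fin d → ℤ, ∫⁻ x in IcoCube n, f x ∂ν := by
  rw [← MeasureTheory.lintegral_iUnion measurableSet_IcoCube IcoCube_disjoint f,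
    IcoCube_iUnion, Measure.restrict_univ]

lemma tsum_measure_cubes (ν : Measure (Euc d)) :
    ∑' n : Fin d → ℤ, ν (IcoCube n) = ν Set.univ := by
  rw [← MeasureTheory.measure_iUnion IcoCube_disjoint measurableSet_IcoCube, IcoCube_iUnion]

/-- The four Jordan-decomposition parts of a complex measure. -/
def jmeas (μ : ComplexMeasure (Euc d)) : Fin 4 → Measure (Euc d) :=
  ![(ComplexMeasure.re μ).toJordanDecomposition.posPart,
    (ComplexMeasure.re μ).toJordanDecomposition.negPart,
    (ComplexMeasure.im μ).toJordanDecomposition.posPart,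
    (ComplexMeasure.im μ).toJordanDecomposition.negPart]

instance jmeas_finite (μ : ComplexMeasure (Euc d)) (v : Fin 4) : IsFiniteMeasure (jmeas μ v) := by
  unfold jmeas
  fin_cases v <;> simp <;> infer_instance

lemma enorm_cInt_le (μ : ComplexMeasure (Euc d)) (f : Euc d → ℂ) :
    (‖cInt μ f‖₊ : ℝ≥0∞) ≤ ∑ v, ∫⁻ y, (‖f y‖₊ : ℝ≥0∞) ∂(jmeas μ v) := by
  have hI : ∀ g : Euc d → ℂ, ∀ ν : Measure (Euc d),
      (‖∫ y, g y ∂ν‖₊ : ℝ≥0∞) ≤ ∫⁻ y, (‖g y‖₊ : ℝ≥0∞) ∂ν := fun g ν =>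
    MeasureTheory.enorm_integral_le_lintegral_enorm _
  set A := ∫ y, f y ∂(jmeas μ 0) with hA
  set B := ∫ y, f y ∂(jmeas μ 1) with hB
  set Cc := ∫ y, f y ∂(jmeas μ 2) with hCc
  set D := ∫ y, f y ∂(jmeas μ 3) with hD
  have hcInt : cInt μ f = (A - B) + Complex.I * (Cc - D) := by
    rw [hA, hB, hCc, hD]; rfl
  calc (‖cInt μ f‖₊ : ℝ≥0∞)
      ≤ (‖A‖₊ : ℝ≥0∞) + (‖B‖₊ : ℝ≥0∞) + ((‖Cc‖₊ : ℝ≥0∞) + (‖D‖₊ : ℝ≥0∞)) := by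
        rw [hcInt]
        calc (‖(A - B) + Complex.I * (Cc - D)‖₊ : ℝ≥0∞)
            ≤ (‖A - B‖₊ : ℝ≥0∞) + (‖Complex.I * (Cc - D)‖₊ : ℝ≥0∞) := by
              exact_mod_cast nnnorm_add_le _ _
          _ ≤ _ := by
              rw [nnnorm_mul, Complex.nnnorm_I, one_mul]
              exact add_le_add (by exact_mod_cast nnnorm_sub_le A B)
                (by exact_mod_cast nnnorm_sub_le Cc D)
    _ ≤ (∫⁻ y, (‖f y‖₊ : ℝ≥0∞) ∂(jmeas μ 0)) + (∫⁻ y, (‖f y‖₊ : ℝ≥0∞) ∂(jmeas μ 1))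
        + ((∫⁻ y, (‖f y‖₊ : ℝ≥0∞) ∂(jmeas μ 2)) + (∫⁻ y, (‖f y‖₊ : ℝ≥0∞) ∂(jmeas μ 3))) :=
        add_le_add (add_le_add (hI f _) (hI f _)) (add_le_add (hI f _) (hI f _))
    _ = ∑ v, ∫⁻ y, (‖f y‖₊ : ℝ≥0∞) ∂(jmeas μ v) := by rw [Fin.sum_univ_four]; ring

/-- Boolean offset vector. -/
def bvec {d : ℕ} (b : Fin d → Bool) : Fin d → ℤ := fun i => if b i then 1 else 0

lemma floor_sub_mem (x : Euc d) {y : Euc d} {m : Fin d → ℤ} (hy : y ∈ IcoCube m) :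
    ∃ b : Fin d → Bool, fl (x - y) = fl x - m - bvec b := by
  refine ⟨fun i => decide (fl (x - y) i ≠ fl x i - m i), ?_⟩
  funext i
  have hyi := hy i
  have hup : fl (x - y) i ≤ fl x i - m i := by
    have h1 : x i - y i ≤ x i - (m i : ℝ) := by have := hyi.1; linarith
    have h2 := Int.floor_mono h1
    rw [Int.floor_sub_intCast] at h2
    exact h2
  have hlo : fl x i - m i - 1 ≤ fl (x - y) i := by
    have h1 : x i - ((m i + 1 : ℤ) : ℝ) ≤ x i - y i := by
      push_cast
      have := hyi.2
      linarith
    have h2 := Int.floor_mono h1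
    rw [Int.floor_sub_intCast] at h2
    show ⌊x i⌋ - m i - 1 ≤ ⌊x i - y i⌋
    omega
  show fl (x - y) i = fl x i - m i
    - (if (decide (fl (x - y) i ≠ fl x i - m i) : Bool) then (1:ℤ) else 0)
  by_cases h : fl (x - y) i = fl x i - m i
  · simp [h]
  · have hd : decide (fl (x - y) i ≠ fl x i - m i) = true := decide_eq_true h
    rw [hd]
    simp only [if_true]
    omega

/-- The cube-wise majorant of samples of `genFun Ψ C ∗ ν`. -/
def Qmaj (ν : Measure (Euc d)) (Ψ : Fin r → Euc d → ℂ) (C : Fin r → (Fin d → ℤ) → ℂ)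
    (n : Fin d → ℤ) : ℝ≥0∞ :=
  ∑' q : (Fin d → ℤ) × (Fin d → Bool), ν (IcoCube q.1) * gMaj Ψ C (n - q.1 - bvec q.2)

variable {Ψ : Fin r → Euc d → ℂ} {C : Fin r → (Fin d → ℤ) → ℂ}

lemma lintegral_enorm_genFun_le (hcont : ∀ i, Continuous (Ψ i))
    (ν : Measure (Euc d)) (x : Euc d) :
    ∫⁻ y, (‖genFun Ψ C (x - y)‖₊ : ℝ≥0∞) ∂ν ≤ Qmaj ν Ψ C (fl x) := by
  calc ∫⁻ y, (‖genFun Ψ C (x - y)‖₊ : ℝ≥0∞) ∂ν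
      = ∑' m : Fin d → ℤ, ∫⁻ y in IcoCube m, (‖genFun Ψ C (x - y)‖₊ : ℝ≥0∞) ∂ν :=
        lintegral_eq_sum_cubes' ν _
    _ ≤ ∑' m : Fin d → ℤ, ν (IcoCube m) *
          ∑ b : Fin d → Bool, gMaj Ψ C (fl x - m - bvec b) := by
        refine ENNReal.tsum_le_tsum fun m => ?_
        have hb : ∀ y ∈ IcoCube m, (‖genFun Ψ C (x - y)‖₊ : ℝ≥0∞)
            ≤ ∑ b : Fin d → Bool, gMaj Ψ C (fl x - m - bvec b) := by
          intro y hy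
          obtain ⟨b, hbeq⟩ := floor_sub_mem x hy
          refine le_trans (enorm_genFun_le_gMaj hcont (x - y)) ?_
          rw [hbeq]
          exact Finset.single_le_sum (f := fun b => gMaj Ψ C (fl x - m - bvec b))
            (fun _ _ => zero_le) (Finset.mem_univ b)
        have := MeasureTheory.setLIntegral_mono_ae (μ := ν) (s := IcoCube m)
          (g := fun _ => ∑ b : Fin d → Bool, gMaj Ψ C (fl x - m - bvec b))
          (by fun_prop) (Filter.Eventually.of_forall hb)
        refine this.trans ?_
        rw [MeasureTheory.setLIntegral_const, mul_comm]
    _ = Qmaj ν Ψ C (fl x) := by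
        unfold Qmaj
        rw [ENNReal.tsum_prod (f := fun (m : Fin d → ℤ) (b : Fin d → Bool) =>
          ν (IcoCube m) * gMaj Ψ C (fl x - m - bvec b))]
        exact tsum_congr fun m => by
          rw [← tsum_fintype (L := SummationFilter.unconditional _), ENNReal.tsum_mul_left]

lemma enorm_mconv_le (hcont : ∀ i, Continuous (Ψ i)) (μ : ComplexMeasure (Euc d)) (x : Euc d) :
    (‖mconv μ (genFun Ψ C) x‖₊ : ℝ≥0∞) ≤ ∑ v, Qmaj (jmeas μ v) Ψ C (fl x) := by
  refine le_trans (enorm_cInt_le μ _) (Finset.sum_le_sum fun v _ => ?_)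
  exact lintegral_enorm_genFun_le hcont (jmeas μ v) x

lemma elp_Qmaj_le (hp : 1 ≤ p) (ν : Measure (Euc d)) :
    elp p (Qmaj ν Ψ C) ≤ ν Set.univ * 2 ^ d * ((∑ i, WNorm 1 (Ψ i)) * vlpNorm p C) := by
  have h1 : elp p (Qmaj ν Ψ C) ≤ ∑' q : (Fin d → ℤ) × (Fin d → Bool),
      ν (IcoCube q.1) * elp p (gMaj Ψ C) := by
    refine le_trans (elp_tsum_le hp _) (ENNReal.tsum_le_tsum fun q => ?_)
    rw [elp_const_mul hp]
    refine mul_le_mul_right ?_ _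
    have heq : (fun n => gMaj Ψ C (n - q.1 - bvec q.2))
        = fun n => gMaj Ψ C (n - (q.1 + bvec q.2)) := by
      funext n; rw [sub_sub]
    rw [heq, elp_shift]
  refine h1.trans ?_
  rw [ENNReal.tsum_prod (f := fun (m : Fin d → ℤ) (_b : Fin d → Bool) =>
    ν (IcoCube m) * elp p (gMaj Ψ C))]
  have h2 : ∀ m : Fin d → ℤ, (∑' _b : Fin d → Bool, ν (IcoCube m) * elp p (gMaj Ψ C))
      = 2 ^ d * (ν (IcoCube m) * elp p (gMaj Ψ C)) := by
    intro m
    rw [tsum_fintype, Finset.sum_const, Finset.card_univ]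
    simp [nsmul_eq_mul]
  simp_rw [h2]
  rw [ENNReal.tsum_mul_left, ENNReal.tsum_mul_right, tsum_measure_cubes]
  calc (2:ℝ≥0∞)^d * (ν Set.univ * elp p (gMaj Ψ C))
      ≤ (2:ℝ≥0∞)^d * (ν Set.univ * ((∑ i, WNorm 1 (Ψ i)) * vlpNorm p C)) :=
        mul_le_mul_right (mul_le_mul_right (elp_gMaj_le hp) _) _
    _ = ν Set.univ * 2^d * ((∑ i, WNorm 1 (Ψ i)) * vlpNorm p C) := by ring

end Measures

section Counting
variable {d : ℕ} {p : ℝ≥0∞}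

lemma tsum_comp_kappa_le {s : ℝ} (hs0 : 0 < s) (G : (Fin d → ℤ) → ℝ≥0∞) :
    ∑' c : Fin d → ℤ, G (fun i => ⌊(c i : ℝ) * s⌋)
      ≤ (⌈1/s⌉₊ : ℝ≥0∞) ^ d * ∑' n, G n := by
  set N₁ := ⌈1/s⌉₊ with hN₁
  have hoff : ∀ z : ℤ, 0 ≤ z - ⌈((⌊(z : ℝ) * s⌋ : ℤ) : ℝ) / s⌉ ∧
      z - ⌈((⌊(z : ℝ) * s⌋ : ℤ) : ℝ) / s⌉ < (N₁ : ℤ) := by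
    intro z
    set v : ℤ := ⌊(z : ℝ) * s⌋ with hv
    have h1 : (v : ℝ) ≤ z * s := Int.floor_le _
    have h2 : (z : ℝ) * s < v + 1 := Int.lt_floor_add_one _
    constructor
    · have : (v : ℝ) / s ≤ z := by rw [div_le_iff₀ hs0]; exact h1
      have := Int.ceil_le.mpr this
      omega
    · have h3 : (z : ℝ) < (v : ℝ) / s + 1 / s := by
        rw [← add_div, lt_div_iff₀ hs0]
        linarith
      have h4 : ((v : ℝ)) / s ≤ ⌈(v : ℝ) / s⌉ := Int.le_ceil _
      have h5 : (1 : ℝ) / s ≤ (N₁ : ℝ) := Nat.le_ceil _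
      have h6 : (z : ℝ) < ((⌈(v : ℝ) / s⌉ + (N₁ : ℤ) : ℤ) : ℝ) := by push_cast; linarith
      have h7 : z < ⌈(v : ℝ) / s⌉ + (N₁ : ℤ) := by exact_mod_cast h6
      omega
  haveI : NeZero N₁ := ⟨by
    have : 0 < N₁ := Nat.ceil_pos.mpr (by positivity)
    omega⟩
  have hρinj : Function.Injective (fun c : Fin d → ℤ =>
      ((fun i => ⌊(c i : ℝ) * s⌋, fun i =>
        (⟨(c i - ⌈((⌊(c i : ℝ) * s⌋ : ℤ) : ℝ) / s⌉).toNat, by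
          have := hoff (c i); omega⟩ : Fin N₁))
        : (Fin d → ℤ) × (Fin d → Fin N₁))) := by
    intro c c' h
    have h1 : (fun i => ⌊(c i : ℝ) * s⌋) = (fun i => ⌊(c' i : ℝ) * s⌋) :=
      congrArg Prod.fst h
    have h2 := congrArg Prod.snd h
    funext i
    have h3 : (c i - ⌈((⌊(c i : ℝ) * s⌋ : ℤ) : ℝ) / s⌉).toNat
        = (c' i - ⌈((⌊(c' i : ℝ) * s⌋ : ℤ) : ℝ) / s⌉).toNat :=
      congrArg Fin.val (congrFun h2 i)
    have h4 : ⌊(c i : ℝ) * s⌋ = ⌊(c' i : ℝ) * s⌋ := congrFun h1 i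
    have hA : ⌈((⌊(c i : ℝ) * s⌋ : ℤ) : ℝ) / s⌉ = ⌈((⌊(c' i : ℝ) * s⌋ : ℤ) : ℝ) / s⌉ := by
      rw [h4]
    have hci := (hoff (c i)).1
    have hci' := (hoff (c' i)).1
    omega
  calc ∑' c : Fin d → ℤ, G (fun i => ⌊(c i : ℝ) * s⌋)
      ≤ ∑' q : (Fin d → ℤ) × (Fin d → Fin N₁), G q.1 :=
        tsum_comp_le_tsum_of_injective hρinj (fun q => G q.1)
    _ = ∑' n : Fin d → ℤ, ∑' _o : Fin d → Fin N₁, G n :=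
        ENNReal.tsum_prod (f := fun n _ => G n)
    _ = (N₁ : ℝ≥0∞) ^ d * ∑' n, G n := by
        rw [← ENNReal.tsum_mul_left]
        refine tsum_congr fun n => ?_
        rw [tsum_fintype, Finset.sum_const, Finset.card_univ]
        simp [nsmul_eq_mul]

lemma exists_bvec_floor {x : ℝ} {s : ℝ} (hs0 : 0 < s) (hs1 : s ≤ 1) :
    ⌊(((⌊x / s⌋ : ℤ)) : ℝ) * s⌋ ≤ ⌊x⌋ ∧ ⌊x⌋ ≤ ⌊((⌊x / s⌋ : ℤ) : ℝ) * s⌋ + 1 := by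
  set c : ℤ := ⌊x / s⌋ with hc
  have h1 : (c : ℝ) * s ≤ x := by
    rw [← le_div_iff₀ hs0]
    exact Int.floor_le _
  have h2 : x < ((c : ℝ) + 1) * s := by
    rw [← div_lt_iff₀ hs0]
    exact Int.lt_floor_add_one _
  constructor
  · exact Int.floor_mono h1
  · have h3 : x ≤ (c : ℝ) * s + 1 := by nlinarith
    calc ⌊x⌋ ≤ ⌊(c : ℝ) * s + 1⌋ := Int.floor_mono h3
      _ = ⌊(c : ℝ) * s⌋ + 1 := by
          rw [show (c : ℝ) * s + 1 = (c : ℝ) * s + ((1 : ℤ) : ℝ) by norm_num,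
            Int.floor_add_intCast]

lemma tsum_floor_samples_le {J : Type*} [Countable J] (X : J → Euc d) {s : ℝ}
    (hs0 : 0 < s) (hs1 : s ≤ 1)
    (hinj : Function.Injective fun j => (fun i => ⌊X j i / s⌋ : Fin d → ℤ))
    (G : (Fin d → ℤ) → ℝ≥0∞) :
    ∑' j, G (fl (X j)) ≤ 2 ^ d * (⌈1/s⌉₊ : ℝ≥0∞) ^ d * ∑' n, G n := by
  set cell : J → (Fin d → ℤ) := fun j => (fun i => ⌊X j i / s⌋) with hcell
  set κ : (Fin d → ℤ) → (Fin d → ℤ) := fun c i => ⌊(c i : ℝ) * s⌋ with hκ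
  have step1 : ∀ j, G (fl (X j)) ≤ ∑ b : Fin d → Bool, G (κ (cell j) + bvec b) := by
    intro j
    have hex : ∃ b : Fin d → Bool, fl (X j) = κ (cell j) + bvec b := by
      refine ⟨fun i => decide (fl (X j) i ≠ κ (cell j) i), ?_⟩
      funext i
      have hb := exists_bvec_floor (x := X j i) hs0 hs1
      show fl (X j) i = κ (cell j) i
        + (if (decide (fl (X j) i ≠ κ (cell j) i) : Bool) then (1:ℤ) else 0)
      by_cases h : fl (X j) i = κ (cell j) i
      · simp [h]
      · have hd : decide (fl (X j) i ≠ κ (cell j) i) = true := decide_eq_true h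
        rw [hd]
        simp only [if_true]
        have h1 : κ (cell j) i ≤ fl (X j) i := hb.1
        have h2 : fl (X j) i ≤ κ (cell j) i + 1 := hb.2
        omega
    obtain ⟨b, hb⟩ := hex
    rw [hb]
    exact Finset.single_le_sum (f := fun b => G (κ (cell j) + bvec b))
      (fun _ _ => zero_le) (Finset.mem_univ b)
  calc ∑' j, G (fl (X j))
      ≤ ∑' j, ∑ b : Fin d → Bool, G (κ (cell j) + bvec b) := ENNReal.tsum_le_tsum step1
    _ = ∑ b : Fin d → Bool, ∑' j, G (κ (cell j) + bvec b) :=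
        Summable.tsum_finsetSum fun _ _ => ENNReal.summable
    _ ≤ ∑ b : Fin d → Bool, ∑' c : Fin d → ℤ, G (κ c + bvec b) := by
        refine Finset.sum_le_sum fun b _ => ?_
        exact tsum_comp_le_tsum_of_injective hinj (fun c => G (κ c + bvec b))
    _ ≤ ∑ b : Fin d → Bool, (⌈1/s⌉₊ : ℝ≥0∞) ^ d * ∑' n, G (n + bvec b) := by
        refine Finset.sum_le_sum fun b _ => ?_
        exact tsum_comp_kappa_le hs0 (fun n => G (n + bvec b))
    _ = ∑ b : Fin d → Bool, (⌈1/s⌉₊ : ℝ≥0∞) ^ d * ∑' n, G n := by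
        refine Finset.sum_congr rfl fun b _ => ?_
        congr 1
        exact (Equiv.addRight (bvec b)).tsum_eq G
    _ = 2 ^ d * (⌈1/s⌉₊ : ℝ≥0∞) ^ d * ∑' n, G n := by
        rw [Finset.sum_const, Finset.card_univ]
        simp [nsmul_eq_mul, mul_assoc]

lemma elp_floor_samples_le {J : Type*} [Countable J] (hp : 1 ≤ p) (X : J → Euc d) {s : ℝ}
    (hs0 : 0 < s) (hs1 : s ≤ 1)
    (hinj : Function.Injective fun j => (fun i => ⌊X j i / s⌋ : Fin d → ℤ))
    (F : (Fin d → ℤ) → ℝ≥0∞) :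
    elp p (fun j => F (fl (X j))) ≤ ((2 * ⌈1/s⌉₊ : ℕ) : ℝ≥0∞) ^ d * elp p F := by
  have hcast : ((2 * ⌈1/s⌉₊ : ℕ) : ℝ≥0∞) ^ d = 2 ^ d * (⌈1/s⌉₊ : ℝ≥0∞) ^ d := by
    push_cast
    rw [mul_pow]
  have hone : (1:ℝ≥0∞) ≤ ((2 * ⌈1/s⌉₊ : ℕ) : ℝ≥0∞) ^ d := by
    refine one_le_pow_of_one_le' ?_ d
    have : (1:ℕ) ≤ 2 * ⌈1/s⌉₊ := by
      have : 0 < ⌈1/s⌉₊ := Nat.ceil_pos.mpr (by positivity)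
      omega
    exact_mod_cast Nat.one_le_cast.mpr this
  by_cases hpt : p = ∞
  · subst hpt
    simp only [elp, if_pos rfl]
    calc ⨆ j, F (fl (X j)) ≤ ⨆ n, F n := iSup_le fun j => le_iSup F (fl (X j))
      _ ≤ _ := le_mul_of_one_le_left (zero_le) hone
  · have h1 : 1 ≤ p.toReal := toReal_pos_of_one_le hp hpt
    have hq : (0:ℝ) < p.toReal := lt_of_lt_of_le zero_lt_one h1
    simp only [elp, if_neg hpt]
    calc (∑' j, F (fl (X j)) ^ p.toReal) ^ (1 / p.toReal)
        ≤ (2 ^ d * (⌈1/s⌉₊ : ℝ≥0∞) ^ d * ∑' n, F n ^ p.toReal) ^ (1 / p.toReal) :=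
          ENNReal.rpow_le_rpow
            (tsum_floor_samples_le X hs0 hs1 hinj (fun n => F n ^ p.toReal)) (by positivity)
      _ = (((2 * ⌈1/s⌉₊ : ℕ) : ℝ≥0∞) ^ d) ^ (1 / p.toReal)
            * (∑' n, F n ^ p.toReal) ^ (1 / p.toReal) := by
          rw [← hcast, ENNReal.mul_rpow_of_nonneg _ _ (by positivity)]
      _ ≤ ((2 * ⌈1/s⌉₊ : ℕ) : ℝ≥0∞) ^ d * (∑' n, F n ^ p.toReal) ^ (1 / p.toReal) := by
          refine mul_le_mul_left ?_ _
          calc (((2 * ⌈1/s⌉₊ : ℕ) : ℝ≥0∞) ^ d) ^ (1 / p.toReal)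
              ≤ (((2 * ⌈1/s⌉₊ : ℕ) : ℝ≥0∞) ^ d) ^ (1:ℝ) :=
                ENNReal.rpow_le_rpow_of_exponent_le hone
                  (by rw [div_le_one hq]; exact h1)
            _ = _ := ENNReal.rpow_one _

end Counting

section ConvSection
variable {d r : ℕ} {p : ℝ≥0∞} {Ψ : Fin r → Euc d → ℂ} {C : Fin r → (Fin d → ℤ) → ℂ}

lemma sum_lp_W_lt_top (hW : ∀ i, WNorm 1 (Ψ i) < ∞) (hC : vlpNorm p C < ∞) :
    (∑ i, lpNorm p (C i) * WNorm 1 (Ψ i)) < ∞ :=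
  ENNReal.sum_lt_top.mpr fun i _ =>
    ENNReal.mul_lt_top (lt_of_le_of_lt (lpNorm_le_vlpNorm i) hC) (hW i)

lemma genFun_integrable (hp : 1 ≤ p) (hcont : ∀ i, Continuous (Ψ i))
    (hW : ∀ i, WNorm 1 (Ψ i) < ∞) (hC : vlpNorm p C < ∞)
    (ν : Measure (Euc d)) [IsFiniteMeasure ν] (x : Euc d) :
    Integrable (fun y => genFun Ψ C (x - y)) ν := by
  have hmeas : Measurable fun y : Euc d => genFun Ψ C (x - y) :=
    (genFun_measurable hp hcont hW hC).comp (measurable_const.sub measurable_id)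
  set Bd := ∑ i, lpNorm p (C i) * WNorm 1 (Ψ i) with hBd
  have hBdlt : Bd < ∞ := sum_lp_W_lt_top hW hC
  refine Integrable.mono' (integrable_const Bd.toReal) hmeas.aestronglyMeasurable
    (Filter.Eventually.of_forall fun y => ?_)
  have h1 : (‖genFun Ψ C (x - y)‖₊ : ℝ≥0∞) ≤ Bd := enorm_genFun_le_const hp hcont (x - y)
  have h2 := ENNReal.toReal_mono hBdlt.ne h1
  simpa using h2

lemma cInt_add {μ : ComplexMeasure (Euc d)} {F G : Euc d → ℂ}
    (hF : ∀ v, Integrable F (jmeas μ v)) (hG : ∀ v, Integrable G (jmeas μ v)) :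
    cInt μ (fun y => F y + G y) = cInt μ F + cInt μ G := by
  have h0 := MeasureTheory.integral_add (hF 0) (hG 0)
  have h1 := MeasureTheory.integral_add (hF 1) (hG 1)
  have h2 := MeasureTheory.integral_add (hF 2) (hG 2)
  have h3 := MeasureTheory.integral_add (hF 3) (hG 3)
  show ((∫ x, F x + G x ∂(jmeas μ 0)) - (∫ x, F x + G x ∂(jmeas μ 1))) +
      Complex.I * ((∫ x, F x + G x ∂(jmeas μ 2)) - (∫ x, F x + G x ∂(jmeas μ 3)))
    = _
  rw [h0, h1, h2, h3]
  show _ = ((∫ x, F x ∂(jmeas μ 0)) - (∫ x, F x ∂(jmeas μ 1))) +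
      Complex.I * ((∫ x, F x ∂(jmeas μ 2)) - (∫ x, F x ∂(jmeas μ 3)))
    + (((∫ x, G x ∂(jmeas μ 0)) - (∫ x, G x ∂(jmeas μ 1))) +
      Complex.I * ((∫ x, G x ∂(jmeas μ 2)) - (∫ x, G x ∂(jmeas μ 3))))
  ring

lemma sep_inj {J : Type*} (X : J → Euc d) {δ : ℝ} (hδ : 0 < δ) (hsep : SeparatedWith X δ) :
    ∃ s : ℝ, 0 < s ∧ s ≤ 1 ∧
      Function.Injective fun j => (fun i => ⌊X j i / s⌋ : Fin d → ℤ) := by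
  refine ⟨min (δ / (Real.sqrt d + 1)) 1, lt_min (by positivity) one_pos, min_le_right _ _, ?_⟩
  set s := min (δ / (Real.sqrt d + 1)) 1 with hs
  have hs0 : 0 < s := lt_min (by positivity) one_pos
  intro j j' h
  by_contra hne
  have hsepj := hsep j j' hne
  have hcoord : ∀ i, |X j i - X j' i| < s := by
    intro i
    have hfl : ⌊X j i / s⌋ = ⌊X j' i / s⌋ := congrFun h i
    have h1 : X j i / s - X j' i / s < 1 := by
      have := Int.floor_le (X j' i / s)
      have := Int.lt_floor_add_one (X j i / s)
      rw [hfl] at *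
      linarith
    have h2 : X j' i / s - X j i / s < 1 := by
      have := Int.floor_le (X j i / s)
      have := Int.lt_floor_add_one (X j' i / s)
      rw [hfl] at *
      linarith
    have h3 : |X j i / s - X j' i / s| < 1 := abs_lt.mpr ⟨by linarith, h1⟩
    rw [div_sub_div_same, abs_div, abs_of_pos hs0, div_lt_one hs0] at h3
    exact h3
  have hdist : dist (X j) (X j') < δ := by
    rw [EuclideanSpace.dist_eq]
    have hsum : (∑ i, dist (X j i) (X j' i) ^ 2) ≤ (d : ℝ) * s ^ 2 := by
      calc (∑ i, dist (X j i) (X j' i) ^ 2) ≤ ∑ _i : Fin d, s ^ 2 :=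
            Finset.sum_le_sum fun i _ => by
              rw [Real.dist_eq]
              nlinarith [hcoord i, abs_nonneg (X j i - X j' i), sq_abs (X j i - X j' i)]
        _ = (d : ℝ) * s ^ 2 := by simp [Finset.sum_const, nsmul_eq_mul]
    have hsd : Real.sqrt d < Real.sqrt d + 1 := by linarith
    calc Real.sqrt (∑ i, dist (X j i) (X j' i) ^ 2) ≤ Real.sqrt ((d:ℝ) * s ^ 2) :=
          Real.sqrt_le_sqrt hsum
      _ = Real.sqrt d * s := by
          rw [Real.sqrt_mul (Nat.cast_nonneg d), Real.sqrt_sq hs0.le]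
      _ ≤ Real.sqrt d * (δ / (Real.sqrt d + 1)) :=
          mul_le_mul_of_nonneg_left (min_le_left _ _) (Real.sqrt_nonneg d)
      _ < (Real.sqrt d + 1) * (δ / (Real.sqrt d + 1)) :=
          mul_lt_mul_of_pos_right hsd (by positivity)
      _ = δ := by field_simp
  exact absurd hsepj (not_le.mpr hdist)

end ConvSection

section SamplingBound
variable {d r t : ℕ} {p : ℝ≥0∞}

lemma lpNorm_le_add {ι : Type*} (hp : 1 ≤ p) {u v w : ι → ℂ} (h : ∀ j, u j = v j + w j) :
    lpNorm p u ≤ lpNorm p v + lpNorm p w := by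
  rw [lpNorm_eq_elp, lpNorm_eq_elp, lpNorm_eq_elp]
  refine le_trans (elp_mono fun j => ?_) (elp_add_le hp _ _)
  rw [h j]
  exact_mod_cast nnnorm_add_le (v j) (w j)

lemma lpNorm_neg {ι : Type*} (w : ι → ℂ) : lpNorm p (fun j => -(w j)) = lpNorm p w := by
  unfold _root_.lpNorm
  simp

/-- Full sampling-sum bound (Lemma B). -/
lemma sampling_sum_le {J : Type*} [Countable J] (hp : 1 ≤ p)
    {Ψ : Fin r → Euc d → ℂ} {C : Fin r → (Fin d → ℤ) → ℂ}
    (hcont : ∀ i, Continuous (Ψ i))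
    (μ : Fin t → ComplexMeasure (Euc d)) (X : J → Euc d) {s : ℝ}
    (hs0 : 0 < s) (hs1 : s ≤ 1)
    (hinj : Function.Injective fun j => (fun i => ⌊X j i / s⌋ : Fin d → ℤ)) :
    ∑ l, lpNorm p (fun j => mconv (μ l) (genFun Ψ C) (X j))
      ≤ (((2 * ⌈1/s⌉₊ : ℕ) : ℝ≥0∞) ^ d * 2 ^ d * ∑ l, ∑ v, (jmeas (μ l) v) Set.univ)
        * ((∑ i, WNorm 1 (Ψ i)) * vlpNorm p C) := by
  set Kc : ℝ≥0∞ := ((2 * ⌈1/s⌉₊ : ℕ) : ℝ≥0∞) ^ d with hKc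
  have hl : ∀ l, lpNorm p (fun j => mconv (μ l) (genFun Ψ C) (X j))
      ≤ Kc * 2 ^ d * (∑ v, (jmeas (μ l) v) Set.univ)
        * ((∑ i, WNorm 1 (Ψ i)) * vlpNorm p C) := by
    intro l
    calc lpNorm p (fun j => mconv (μ l) (genFun Ψ C) (X j))
        ≤ elp p (fun j => (∑ v, Qmaj (jmeas (μ l) v) Ψ C (fl (X j)))) := by
          rw [lpNorm_eq_elp]
          exact elp_mono fun j => enorm_mconv_le hcont (μ l) (X j)
      _ ≤ Kc * elp p (fun n => ∑ v, Qmaj (jmeas (μ l) v) Ψ C n) :=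
          elp_floor_samples_le hp X hs0 hs1 hinj _
      _ ≤ Kc * ∑ v, elp p (Qmaj (jmeas (μ l) v) Ψ C) :=
          mul_le_mul_right (elp_finsum_le hp _ _) _
      _ ≤ Kc * ((∑ v, (jmeas (μ l) v) Set.univ)
            * (2 ^ d * ((∑ i, WNorm 1 (Ψ i)) * vlpNorm p C))) := by
          refine mul_le_mul_right ?_ _
          refine le_trans (Finset.sum_le_sum fun v _ => elp_Qmaj_le hp (jmeas (μ l) v)) ?_
          simp_rw [mul_assoc]
          rw [← Finset.sum_mul]
      _ = Kc * 2 ^ d * (∑ v, (jmeas (μ l) v) Set.univ)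
            * ((∑ i, WNorm 1 (Ψ i)) * vlpNorm p C) := by ring
  calc ∑ l, lpNorm p (fun j => mconv (μ l) (genFun Ψ C) (X j))
      ≤ ∑ l, Kc * 2 ^ d * (∑ v, (jmeas (μ l) v) Set.univ)
          * ((∑ i, WNorm 1 (Ψ i)) * vlpNorm p C) := Finset.sum_le_sum fun l _ => hl l
    _ = (∑ l, Kc * 2 ^ d * (∑ v, (jmeas (μ l) v) Set.univ))
          * ((∑ i, WNorm 1 (Ψ i)) * vlpNorm p C) := (Finset.sum_mul _ _ _).symm
    _ = (Kc * 2 ^ d * ∑ l, ∑ v, (jmeas (μ l) v) Set.univ)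
          * ((∑ i, WNorm 1 (Ψ i)) * vlpNorm p C) := by
        rw [← Finset.mul_sum]

end SamplingBound

end Helpers

set_option maxHeartbeats 1000000 in
open MeasureTheory ENNReal in
/-- Theorem 3.1: stability of sampling under perturbation of the
generators of the shift invariant space. -/
theorem stability_under_generator_perturbation
    (d r t : ℕ) (p : ℝ≥0∞) (hp : 1 ≤ p) (J : Type) [Countable J]
    (μ : Fin t → ComplexMeasure (Euc d))
    (Φ : Fin r → Euc d → ℂ) (hΦ : ∀ i, MemW01 (Φ i)) (hR : RieszCond p Φ)
    (X : J → Euc d) (hsep : SeparatedSet X)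
    (hsamp : SamplingSet p Φ μ X) :
    ∃ ε₀ : ℝ, 0 < ε₀ ∧ ∀ Θ : Fin r → Euc d → ℂ, (∀ i, MemW01 (Θ i)) →
      (∑ i, WNorm 1 (fun x => Φ i x - Θ i x)) < ENNReal.ofReal ε₀ →
      RieszCond p Θ ∧ SamplingSet p Θ μ X := by
  obtain ⟨m, M, hm0, hmM, hRz⟩ := hR
  obtain ⟨A, B, hA0, hAB, hSz⟩ := hsamp
  have hB0 : 0 < B := lt_of_lt_of_le hA0 hAB
  obtain ⟨δ, hδ0, hsepw⟩ := hsep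
  obtain ⟨s, hs0, hs1, hinj⟩ := sep_inj X hδ0 hsepw
  set K : ℝ≥0∞ := ((2 * ⌈1/s⌉₊ : ℕ) : ℝ≥0∞) ^ d * 2 ^ d
    * ∑ l, ∑ v, (jmeas (μ l) v) Set.univ with hK
  have hKlt : K < ∞ := by
    rw [hK, lt_top_iff_ne_top]
    refine ENNReal.mul_ne_top (ENNReal.mul_ne_top (ENNReal.pow_ne_top (ENNReal.natCast_ne_top _))
      (ENNReal.pow_ne_top ENNReal.ofNat_ne_top)) ?_
    refine (ENNReal.sum_lt_top.mpr fun l _ => ENNReal.sum_lt_top.mpr fun v _ => ?_).ne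
    exact measure_lt_top _ _
  set K₀ : ℝ := K.toReal with hK₀def
  have hK₀ : 0 ≤ K₀ := ENNReal.toReal_nonneg
  have hKle : K ≤ ENNReal.ofReal K₀ := by
    rw [hK₀def, ENNReal.ofReal_toReal hKlt.ne]
  set ε₀ : ℝ := min (m/2) ((A/2) * (m/2) / (K₀ + A + 1)) with hε₀def
  have hden : (0:ℝ) < K₀ + A + 1 := by linarith
  have hε₀pos : 0 < ε₀ := lt_min (by linarith) (by positivity)
  have hε₀m : ε₀ ≤ m/2 := min_le_left _ _
  have hchoice : (K₀ + A) * ε₀ * (2/m) ≤ A/2 := by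
    have he2 : ε₀ ≤ (A/2) * (m/2) / (K₀ + A + 1) := min_le_right _ _
    have h2m : (0:ℝ) < 2/m := by positivity
    have h1 : (K₀ + A) * ε₀ ≤ (K₀ + A + 1) * ((A/2) * (m/2) / (K₀ + A + 1)) :=
      mul_le_mul (by linarith) he2 hε₀pos.le (by linarith)
    have h2 : (K₀ + A + 1) * ((A/2) * (m/2) / (K₀ + A + 1)) = (A/2) * (m/2) := by
      field_simp
    rw [h2] at h1
    calc (K₀ + A) * ε₀ * (2/m) ≤ ((A/2) * (m/2)) * (2/m) :=
          mul_le_mul_of_nonneg_right h1 h2m.le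
      _ = A/2 := by field_simp
  refine ⟨ε₀, hε₀pos, fun Θ hΘ hless => ?_⟩
  set Δ : Fin r → Euc d → ℂ := fun i x => Φ i x - Θ i x with hΔdef
  have hWΔsum : (∑ i, WNorm 1 (Δ i)) < ENNReal.ofReal ε₀ := hless
  have hcontΦ : ∀ i, Continuous (Φ i) := fun i => (hΦ i).1
  have hcontΘ : ∀ i, Continuous (Θ i) := fun i => (hΘ i).1
  have hcontΔ : ∀ i, Continuous (Δ i) := fun i => (hcontΦ i).sub (hcontΘ i)
  have hWΦ : ∀ i, WNorm 1 (Φ i) < ∞ := fun i => (hΦ i).2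
  have hWΘ : ∀ i, WNorm 1 (Θ i) < ∞ := fun i => (hΘ i).2
  have hWΔ : ∀ i, WNorm 1 (Δ i) < ∞ := fun i =>
    lt_of_le_of_lt
      (Finset.single_le_sum (f := fun i => WNorm 1 (Δ i)) (fun _ _ => zero_le)
        (Finset.mem_univ i))
      (hWΔsum.trans ENNReal.ofReal_lt_top)
  -- the main quantitative step, for each coefficient sequence
  have main : ∀ C : Fin r → (Fin d → ℤ) → ℂ, vlpNorm p C < ∞ →
      (ENNReal.ofReal (m/2) * vlpNorm p C ≤ eLpNorm (genFun Θ C) p volume ∧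
        eLpNorm (genFun Θ C) p volume ≤ ENNReal.ofReal (M + ε₀) * vlpNorm p C) ∧
      (ENNReal.ofReal (A/2) * eLpNorm (genFun Θ C) p volume ≤
          ∑ l, lpNorm p (fun j => mconv (μ l) (genFun Θ C) (X j)) ∧
        ∑ l, lpNorm p (fun j => mconv (μ l) (genFun Θ C) (X j)) ≤
          ENNReal.ofReal (B + (B + K₀) * ε₀ * (2/m)) * eLpNorm (genFun Θ C) p volume) := by
    intro C hC
    set c := vlpNorm p C with hc
    set FΦ := eLpNorm (genFun Φ C) p volume with hFΦ
    set FΘ := eLpNorm (genFun Θ C) p volume with hFΘ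
    set FΔ := eLpNorm (genFun Δ C) p volume with hFΔ
    set SΦ := ∑ l, lpNorm p (fun j => mconv (μ l) (genFun Φ C) (X j)) with hSΦ
    set SΘ := ∑ l, lpNorm p (fun j => mconv (μ l) (genFun Θ C) (X j)) with hSΘ
    set SΔ := ∑ l, lpNorm p (fun j => mconv (μ l) (genFun Δ C) (X j)) with hSΔ
    have hsplit : ∀ x, genFun Φ C x = genFun Θ C x + genFun Δ C x :=
      genFun_add_split hp hcontΘ hcontΔ hWΘ hWΔ hC
    have hmΦ : Measurable (genFun Φ C) := genFun_measurable hp hcontΦ hWΦ hC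
    have hmΘ : Measurable (genFun Θ C) := genFun_measurable hp hcontΘ hWΘ hC
    have hmΔ : Measurable (genFun Δ C) := genFun_measurable hp hcontΔ hWΔ hC
    have hFΔle : FΔ ≤ ENNReal.ofReal ε₀ * c := by
      refine (eLpNorm_genFun_le hp hcontΔ).trans ?_
      exact mul_le_mul_left hWΔsum.le _
    have hFtri1 : FΦ ≤ FΘ + FΔ := by
      rw [hFΦ, show genFun Φ C = fun x => genFun Θ C x + genFun Δ C x from funext hsplit]
      exact eLpNorm_add_le hmΘ.aestronglyMeasurable hmΔ.aestronglyMeasurable hp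
    have hFtri2 : FΘ ≤ FΦ + FΔ := by
      rw [hFΘ, show genFun Θ C = fun x => genFun Φ C x - genFun Δ C x from
        funext fun x => by rw [hsplit x]; ring]
      exact eLpNorm_sub_le hmΦ.aestronglyMeasurable hmΔ.aestronglyMeasurable hp
    have hcfin : c ≠ ∞ := hC.ne
    obtain ⟨hRl, hRu⟩ := hRz C hC
    obtain ⟨hSl, hSu⟩ := hSz C hC
    have hSΔle : SΔ ≤ ENNReal.ofReal (K₀ * ε₀) * c := by
      refine (sampling_sum_le hp hcontΔ μ X hs0 hs1 hinj).trans ?_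
      rw [← hK]
      calc K * ((∑ i, WNorm 1 (Δ i)) * c)
          ≤ ENNReal.ofReal K₀ * (ENNReal.ofReal ε₀ * c) :=
            mul_le_mul hKle (mul_le_mul hWΔsum.le le_rfl (zero_le) (zero_le))
              (zero_le) (zero_le)
        _ = ENNReal.ofReal (K₀ * ε₀) * c := by
            rw [← mul_assoc, ← ENNReal.ofReal_mul hK₀]
    have hmc : ∀ (l : Fin t) (j : J), mconv (μ l) (genFun Φ C) (X j)
        = mconv (μ l) (genFun Θ C) (X j) + mconv (μ l) (genFun Δ C) (X j) := by
      intro l j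
      have hIΘ : ∀ v, Integrable (fun y => genFun Θ C (X j - y)) (jmeas (μ l) v) :=
        fun v => genFun_integrable hp hcontΘ hWΘ hC _ _
      have hIΔ : ∀ v, Integrable (fun y => genFun Δ C (X j - y)) (jmeas (μ l) v) :=
        fun v => genFun_integrable hp hcontΔ hWΔ hC _ _
      show cInt (μ l) (fun y => genFun Φ C (X j - y)) = _
      rw [show (fun y => genFun Φ C (X j - y))
        = fun y => genFun Θ C (X j - y) + genFun Δ C (X j - y) from funext fun y => hsplit _]
      exact cInt_add hIΘ hIΔ
    have hStr1 : SΦ ≤ SΘ + SΔ := by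
      refine le_trans (Finset.sum_le_sum fun l (_ : l ∈ Finset.univ) =>
        lpNorm_le_add hp (fun j => hmc l j)) ?_
      rw [Finset.sum_add_distrib]
    have hStr2 : SΘ ≤ SΦ + SΔ := by
      have hterm : ∀ l : Fin t, lpNorm p (fun j => mconv (μ l) (genFun Θ C) (X j))
          ≤ lpNorm p (fun j => mconv (μ l) (genFun Φ C) (X j))
            + lpNorm p (fun j => mconv (μ l) (genFun Δ C) (X j)) := by
        intro l
        have h := lpNorm_le_add (p := p) hp
          (u := fun j => mconv (μ l) (genFun Θ C) (X j))
          (v := fun j => mconv (μ l) (genFun Φ C) (X j))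
          (w := fun j => -(mconv (μ l) (genFun Δ C) (X j)))
          (fun j => by
            show mconv (μ l) (genFun Θ C) (X j)
              = mconv (μ l) (genFun Φ C) (X j) + -(mconv (μ l) (genFun Δ C) (X j))
            rw [hmc l j]
            ring)
        rwa [_root_.lpNorm_neg] at h
      calc SΘ ≤ ∑ l, (lpNorm p (fun j => mconv (μ l) (genFun Φ C) (X j))
            + lpNorm p (fun j => mconv (μ l) (genFun Δ C) (X j))) :=
            Finset.sum_le_sum fun l _ => hterm l
        _ = SΦ + SΔ := Finset.sum_add_distrib
    -- Riesz bounds for Θ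
    have hFlow : ENNReal.ofReal (m/2) * c ≤ FΘ := by
      have e1 : ENNReal.ofReal m * c ≤ FΘ + ENNReal.ofReal (m/2) * c := by
        refine hRl.trans (hFtri1.trans ?_)
        refine add_le_add_right (hFΔle.trans ?_) _
        exact mul_le_mul_left (ENNReal.ofReal_le_ofReal hε₀m) _
      have e2 : ENNReal.ofReal m * c = ENNReal.ofReal (m/2) * c + ENNReal.ofReal (m/2) * c := by
        rw [← add_mul, ← ENNReal.ofReal_add (by linarith) (by linarith)]
        norm_num
      rw [e2] at e1
      exact (ENNReal.add_le_add_iff_right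
        (ENNReal.mul_ne_top ENNReal.ofReal_ne_top hcfin)).mp e1
    have hcle : c ≤ ENNReal.ofReal (2/m) * FΘ := by
      have e3 : c = ENNReal.ofReal (2/m) * (ENNReal.ofReal (m/2) * c) := by
        rw [← mul_assoc, ← ENNReal.ofReal_mul (by positivity),
          show (2/m) * (m/2) = 1 by field_simp, ENNReal.ofReal_one, one_mul]
      rw [e3]
      exact mul_le_mul_right hFlow _
    have hFup : FΘ ≤ ENNReal.ofReal (M + ε₀) * c := by
      refine hFtri2.trans ?_
      calc FΦ + FΔ ≤ ENNReal.ofReal M * c + ENNReal.ofReal ε₀ * c := add_le_add hRu hFΔle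
        _ = ENNReal.ofReal (M + ε₀) * c := by
            rw [← add_mul, ← ENNReal.ofReal_add (by linarith) hε₀pos.le]
    have hFΘfin : FΘ ≠ ∞ :=
      (lt_of_le_of_lt hFup (ENNReal.mul_lt_top ENNReal.ofReal_lt_top hC)).ne
    -- sampling bounds for Θ
    have hSup2 : SΘ ≤ ENNReal.ofReal (B + (B + K₀) * ε₀ * (2/m)) * FΘ := by
      calc SΘ ≤ SΦ + SΔ := hStr2
        _ ≤ ENNReal.ofReal B * FΦ + ENNReal.ofReal (K₀ * ε₀) * c := add_le_add hSu hSΔle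
        _ ≤ ENNReal.ofReal B * (FΘ + ENNReal.ofReal ε₀ * c)
            + ENNReal.ofReal (K₀ * ε₀) * c := by
            refine add_le_add_left (mul_le_mul_right (hFtri1.trans ?_) _) _
            exact add_le_add_right hFΔle _
        _ = ENNReal.ofReal B * FΘ + ENNReal.ofReal (B * ε₀ + K₀ * ε₀) * c := by
            rw [mul_add, ENNReal.ofReal_add (mul_nonneg hB0.le hε₀pos.le)
              (mul_nonneg hK₀ hε₀pos.le), add_assoc]
            congr 1
            rw [add_mul, ← mul_assoc, ← ENNReal.ofReal_mul hB0.le]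
        _ ≤ ENNReal.ofReal B * FΘ
            + ENNReal.ofReal (B * ε₀ + K₀ * ε₀) * (ENNReal.ofReal (2/m) * FΘ) :=
            add_le_add_right (mul_le_mul_right hcle _) _
        _ = ENNReal.ofReal B * FΘ
              + ENNReal.ofReal ((B * ε₀ + K₀ * ε₀) * (2/m)) * FΘ := by
            rw [← mul_assoc, ← ENNReal.ofReal_mul
              (add_nonneg (mul_nonneg hB0.le hε₀pos.le) (mul_nonneg hK₀ hε₀pos.le))]
        _ = ENNReal.ofReal (B + (B + K₀) * ε₀ * (2/m)) * FΘ := by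
            rw [← add_mul, ← ENNReal.ofReal_add hB0.le
              (mul_nonneg (add_nonneg (mul_nonneg hB0.le hε₀pos.le)
                (mul_nonneg hK₀ hε₀pos.le)) (by positivity))]
            congr 2
            ring
    have hSlow2 : ENNReal.ofReal (A/2) * FΘ ≤ SΘ := by
      have e1 : ENNReal.ofReal A * FΘ ≤ SΘ + ENNReal.ofReal (A/2) * FΘ := by
        calc ENNReal.ofReal A * FΘ
            ≤ ENNReal.ofReal A * (FΦ + FΔ) := mul_le_mul_right hFtri2 _
          _ ≤ ENNReal.ofReal A * FΦ + ENNReal.ofReal A * (ENNReal.ofReal ε₀ * c) := by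
              rw [mul_add]
              exact add_le_add_right (mul_le_mul_right hFΔle _) _
          _ ≤ (SΘ + SΔ) + ENNReal.ofReal (A * ε₀) * c := by
              refine add_le_add (hSl.trans hStr1) (le_of_eq ?_)
              rw [← mul_assoc, ← ENNReal.ofReal_mul hA0.le]
          _ ≤ SΘ + ENNReal.ofReal (K₀ * ε₀) * c + ENNReal.ofReal (A * ε₀) * c :=
              add_le_add_left (add_le_add_right hSΔle _) _
          _ = SΘ + ENNReal.ofReal ((K₀ + A) * ε₀) * c := by
              rw [add_assoc, ← add_mul, ← ENNReal.ofReal_add (mul_nonneg hK₀ hε₀pos.le)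
                (mul_nonneg hA0.le hε₀pos.le)]
              congr 3
              ring
          _ ≤ SΘ + ENNReal.ofReal ((K₀ + A) * ε₀) * (ENNReal.ofReal (2/m) * FΘ) :=
              add_le_add_right (mul_le_mul_right hcle _) _
          _ = SΘ + ENNReal.ofReal ((K₀ + A) * ε₀ * (2/m)) * FΘ := by
              rw [← mul_assoc, ← ENNReal.ofReal_mul (by positivity)]
          _ ≤ SΘ + ENNReal.ofReal (A/2) * FΘ :=
              add_le_add_right (mul_le_mul_left (ENNReal.ofReal_le_ofReal hchoice) _) _
      have e2 : ENNReal.ofReal A * FΘ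
          = ENNReal.ofReal (A/2) * FΘ + ENNReal.ofReal (A/2) * FΘ := by
        rw [← add_mul, ← ENNReal.ofReal_add (by linarith) (by linarith)]
        norm_num
      rw [e2] at e1
      exact (ENNReal.add_le_add_iff_right
        (ENNReal.mul_ne_top ENNReal.ofReal_ne_top hFΘfin)).mp e1
    exact ⟨⟨hFlow, hFup⟩, ⟨hSlow2, hSup2⟩⟩
  constructor
  · refine ⟨m/2, M + ε₀, by linarith, by linarith, fun C hC => (main C hC).1⟩
  · refine ⟨A/2, B + (B + K₀) * ε₀ * (2/m), by linarith, ?_, fun C hC => (main C hC).2⟩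
    have h1 : 0 ≤ (B + K₀) * ε₀ * (2/m) := by positivity
    linarith
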